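/- If G is a (P₃ ∪ P₂, diamond)-free graph with clique number ω = 3, then χ(G) ≤ 6. -/

import Mathlib

open SimpleGraph

/-- `H` occurs as an induced subgraph of `G`. -/
def IsInducedCopy {α β : Type*} (H : SimpleGraph α) (G : SimpleGraph β) : Prop :=
  ∃ f : α ↪ β, ∀ a b : α, G.Adj (f a) (f b) ↔ H.Adj a b

/-- `G` is `H`-free: no induced copy of `H`. -/
def Free {α β : Type*} (G : SimpleGraph α) (H : SimpleGraph β) : Prop :=
  ¬ IsInducedCopy H G

/-- `P₃ ∪ P₂`: disjoint union of a path on 3 vertices and an edge. -/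
def P3UP2 : SimpleGraph (Fin 5) :=
  SimpleGraph.fromRel (fun a b => (a, b) ∈ [((0 : Fin 5), (1 : Fin 5)), (1, 2), (3, 4)])

/-- The diamond: `K₄` minus an edge. -/
def diamondG : SimpleGraph (Fin 4) :=
  SimpleGraph.fromRel (fun a b =>
    (a, b) ∈ [((0 : Fin 4), (2 : Fin 4)), (0, 3), (1, 2), (1, 3), (2, 3)])

/-- `2K₂`: two disjoint edges. -/
def twoK2 : SimpleGraph (Fin 4) :=
  SimpleGraph.fromRel (fun a b => (a, b) ∈ [((0 : Fin 4), (1 : Fin 4)), (2, 3)])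

/-- `P₄ ∪ P₂`. -/
def P4UP2 : SimpleGraph (Fin 6) :=
  SimpleGraph.fromRel (fun a b =>
    (a, b) ∈ [((0 : Fin 6), (1 : Fin 6)), (1, 2), (2, 3), (4, 5)])

/-- The cycle on `n` vertices (for `n ≥ 3`), as a graph on `ZMod n`. -/
def cycG (n : ℕ) : SimpleGraph (ZMod n) :=
  SimpleGraph.fromRel (fun a b => b = a + 1)

/-- A graph is perfect if every induced subgraph has chromatic number
equal to its clique number. -/
def IsPerfect {V : Type*} (G : SimpleGraph V) : Prop :=
  ∀ s : Set V, (G.induce s).chromaticNumber = ((G.induce s).cliqueNum : ℕ∞)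

/-- The set `C_{ij}` attached to a maximum clique enumerated by `f : Fin ω ↪ V`:
vertices outside the clique, non-adjacent to both `f i` and `f j`, where `(i,j)`
is the lexicographically least such pair (this closed form is equivalent to the
iterative definition removing earlier `C`-sets). -/
def Cset {V : Type*} (G : SimpleGraph V) {ω : ℕ} (f : Fin ω ↪ V) (i j : Fin ω) : Set V :=
  {v | v ∉ Set.range f ∧ ¬ G.Adj v (f i) ∧ ¬ G.Adj v (f j) ∧
    ∀ p q : Fin ω, p < q → ¬ G.Adj v (f p) → ¬ G.Adj v (f q) →
      i < p ∨ (i = p ∧ j ≤ q)}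

/-- The set `I_a` attached to a maximum clique enumerated by `f : Fin ω ↪ V`:
vertices outside the clique adjacent to every clique vertex except `f k`. -/
def Iset {V : Type*} (G : SimpleGraph V) {ω : ℕ} (f : Fin ω ↪ V) (k : Fin ω) : Set V :=
  {v | v ∉ Set.range f ∧ ¬ G.Adj v (f k) ∧ ∀ l : Fin ω, l ≠ k → G.Adj v (f l)}

lemma diamond_aux {V : Type*} {G : SimpleGraph V} (h2 : _root_.Free G diamondG) {a b x y : V}
    (hne : a ≠ b) (hnadj : ¬ G.Adj a b) (hxy : G.Adj x y)
    (hax : G.Adj a x) (hay : G.Adj a y) (hbx : G.Adj b x) (hby : G.Adj b y) : False := by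
  have hnadj' : ¬ G.Adj b a := fun h => hnadj h.symm
  have hyx := hxy.symm
  have hxa := hax.symm; have hya := hay.symm; have hxb := hbx.symm; have hyb := hby.symm
  have hne' := hne.symm
  have nax : a ≠ x := hax.ne; have nay : a ≠ y := hay.ne
  have nbx : b ≠ x := hbx.ne; have nby : b ≠ y := hby.ne
  have nxy : x ≠ y := hxy.ne
  have nxa := nax.symm; have nya := nay.symm; have nxb := nbx.symm
  have nyb := nby.symm; have nyx := nxy.symm
  have ia : ¬ G.Adj a a := fun h => G.loopless.irrefl a h
  have ib : ¬ G.Adj b b := fun h => G.loopless.irrefl b h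
  have ix : ¬ G.Adj x x := fun h => G.loopless.irrefl x h
  have iy : ¬ G.Adj y y := fun h => G.loopless.irrefl y h
  apply h2
  refine ⟨⟨![a,b,x,y], ?_⟩, ?_⟩
  · intro i j h
    fin_cases i <;> fin_cases j <;> simp_all
  · intro p q
    fin_cases p <;> fin_cases q <;>
      simp only [Function.Embedding.coeFn_mk, Fin.zero_eta, Fin.mk_one, Fin.isValue,
        Fin.reduceFinMk, Matrix.cons_val_zero, Matrix.cons_val_one,
        Matrix.head_cons, Matrix.cons_val_two, Matrix.tail_cons, Matrix.cons_val_three] <;>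
      first
        | exact iff_of_true (by assumption)
            (by simp [diamondG, SimpleGraph.fromRel_adj]; try decide)
        | exact iff_of_false (by assumption)
            (by simp [diamondG, SimpleGraph.fromRel_adj]; try decide)

lemma p3p2_aux {V : Type*} {G : SimpleGraph V} (h1 : _root_.Free G P3UP2) {a b c d e : V}
    (hab : G.Adj a b) (hbc : G.Adj b c) (hac : ¬ G.Adj a c) (hde : G.Adj d e)
    (had : ¬ G.Adj a d) (hae : ¬ G.Adj a e) (hbd : ¬ G.Adj b d) (hbe : ¬ G.Adj b e)
    (hcd : ¬ G.Adj c d) (hce : ¬ G.Adj c e)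
    (nac : a ≠ c) (nad : a ≠ d) (nae : a ≠ e) (nbd : b ≠ d) (nbe : b ≠ e)
    (ncd : c ≠ d) (nce : c ≠ e) : False := by
  have hba := hab.symm; have hcb := hbc.symm; have hed := hde.symm
  have hca : ¬ G.Adj c a := fun h => hac h.symm
  have hda : ¬ G.Adj d a := fun h => had h.symm
  have hea : ¬ G.Adj e a := fun h => hae h.symm
  have hdb : ¬ G.Adj d b := fun h => hbd h.symm
  have heb : ¬ G.Adj e b := fun h => hbe h.symm
  have hdc : ¬ G.Adj d c := fun h => hcd h.symm
  have hec : ¬ G.Adj e c := fun h => hce h.symm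
  have nab : a ≠ b := hab.ne; have nbc : b ≠ c := hbc.ne; have nde : d ≠ e := hde.ne
  have nba := nab.symm; have nca := nac.symm; have ncb := nbc.symm
  have nda := nad.symm; have nea := nae.symm; have ndb := nbd.symm
  have neb := nbe.symm; have ndc := ncd.symm; have nec := nce.symm
  have ned := nde.symm
  have ia : ¬ G.Adj a a := fun h => G.loopless.irrefl a h
  have ib : ¬ G.Adj b b := fun h => G.loopless.irrefl b h
  have ic : ¬ G.Adj c c := fun h => G.loopless.irrefl c h
  have id' : ¬ G.Adj d d := fun h => G.loopless.irrefl d h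
  have ie' : ¬ G.Adj e e := fun h => G.loopless.irrefl e h
  apply h1
  refine ⟨⟨![a,b,c,d,e], ?_⟩, ?_⟩
  · intro i j h
    fin_cases i <;> fin_cases j <;> simp_all
  · intro p q
    fin_cases p <;> fin_cases q <;>
      simp only [Function.Embedding.coeFn_mk, Fin.zero_eta, Fin.mk_one, Fin.isValue,
        Fin.reduceFinMk, Matrix.cons_val_zero, Matrix.cons_val_one,
        Matrix.head_cons, Matrix.cons_val_two, Matrix.tail_cons, Matrix.cons_val_three,
        Matrix.cons_val_four] <;>
      first
        | exact iff_of_true (by assumption)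
            (by simp [P3UP2, SimpleGraph.fromRel_adj]; try decide)
        | exact iff_of_false (by assumption)
            (by simp [P3UP2, SimpleGraph.fromRel_adj]; try decide)

lemma clique4_aux {V : Type*} [Fintype V] {G : SimpleGraph V} (hω : G.cliqueNum = 3)
    {a b c d : V} (hab : G.Adj a b) (hac : G.Adj a c) (had : G.Adj a d)
    (hbc : G.Adj b c) (hbd : G.Adj b d) (hcd : G.Adj c d) : False := by
  classical
  have hba := hab.symm; have hca := hac.symm; have hda := had.symm
  have hcb := hbc.symm; have hdb := hbd.symm; have hdc := hcd.symm
  have nab : a ≠ b := hab.ne; have nac : a ≠ c := hac.ne; have nad : a ≠ d := had.ne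
  have nbc : b ≠ c := hbc.ne; have nbd : b ≠ d := hbd.ne; have ncd : c ≠ d := hcd.ne
  have hcl : G.IsClique ({a,b,c,d} : Finset V) := by
    intro x hx y hy hxy
    simp only [Finset.coe_insert, Set.mem_insert_iff, Finset.coe_singleton,
      Set.mem_singleton_iff] at hx hy
    rcases hx with rfl|rfl|rfl|rfl <;> rcases hy with rfl|rfl|rfl|rfl <;>
      first | exact absurd rfl hxy | assumption
  have hcard : ({a,b,c,d} : Finset V).card = 4 := by
    rw [Finset.card_insert_of_notMem (by simp [nab, nac, nad]),
      Finset.card_insert_of_notMem (by simp [nbc, nbd]),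
      Finset.card_insert_of_notMem (by simp [ncd]), Finset.card_singleton]
  have h4 := SimpleGraph.IsClique.card_le_cliqueNum (tc := hcl)
  rw [hcard, hω] at h4
  omega



open scoped Classical in
noncomputable def rkf {V : Type*} [Fintype V] (G : SimpleGraph V)
    (e : V ≃ Fin (Fintype.card V)) (P : V → Prop) (v : V) : ℕ :=
  (Finset.univ.filter (fun t => P t ∧ G.Adj t v ∧ e t < e v)).card

open scoped Classical in
lemma rkf_mem {V : Type*} [Fintype V] (G : SimpleGraph V)
    (e : V ≃ Fin (Fintype.card V)) (P : V → Prop) (v t : V) :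
    t ∈ (Finset.univ.filter (fun t => P t ∧ G.Adj t v ∧ e t < e v)) ↔
      P t ∧ G.Adj t v ∧ e t < e v := by
  simp [Finset.mem_filter]

open scoped Classical in
noncomputable def colorFun {V : Type*} [Fintype V] (G : SimpleGraph V)
    (e : V ≃ Fin (Fintype.card V)) (f0 f1 f2 : V) (v : V) : Fin 6 :=
  if v = f0 then 0 else if v = f1 then 1 else if v = f2 then 3
  else if G.Adj v f1 then (if rkf G e (fun t => G.Adj t f1) v = 0 then 3 else 4)
  else if G.Adj v f0 then (if rkf G e (fun t => G.Adj t f0) v = 0 then 5 else 2)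
  else (if rkf G e (fun t => ¬ G.Adj t f0 ∧ ¬ G.Adj t f1) v = 0 then 0
        else if rkf G e (fun t => ¬ G.Adj t f0 ∧ ¬ G.Adj t f1) v = 1 then 1 else 2)
theorem stmt13 {V : Type*} [Fintype V] (G : SimpleGraph V) (h1 : _root_.Free G P3UP2)
    (h2 : _root_.Free G diamondG) (hω : G.cliqueNum = 3) :
    G.chromaticNumber ≤ (6 : ℕ∞) := by
  classical
  obtain ⟨s, hs⟩ := G.exists_isNClique_cliqueNum
  rw [hω] at hs
  obtain ⟨f0, f1, f2, n01, n02, n12, rfl⟩ := Finset.card_eq_three.mp hs.card_eq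
  have ha01 : G.Adj f0 f1 := hs.isClique (by simp) (by simp) n01
  have ha02 : G.Adj f0 f2 := hs.isClique (by simp) (by simp) n02
  have ha12 : G.Adj f1 f2 := hs.isClique (by simp) (by simp) n12
  have ha10 := ha01.symm; have ha20 := ha02.symm; have ha21 := ha12.symm
  obtain ⟨e⟩ : Nonempty (V ≃ Fin (Fintype.card V)) := ⟨Fintype.equivFin V⟩
  have L01 : ∀ w, w ≠ f2 → G.Adj w f0 → G.Adj w f1 → False := by
    intro w hw2 hA0 hA1
    by_cases hA2 : G.Adj w f2
    · exact clique4_aux hω hA0 hA1 hA2 ha01 ha02 ha12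
    · exact diamond_aux h2 hw2 hA2 ha01 hA0 hA1 ha20 ha21
  have L02 : ∀ w, w ≠ f1 → G.Adj w f0 → G.Adj w f2 → False := by
    intro w hw1 hA0 hA2
    by_cases hA1 : G.Adj w f1
    · exact clique4_aux hω hA0 hA1 hA2 ha01 ha02 ha12
    · exact diamond_aux h2 hw1 hA1 ha02 hA0 hA2 ha10 ha12
  have L12 : ∀ w, w ≠ f0 → G.Adj w f1 → G.Adj w f2 → False := by
    intro w hw0 hA1 hA2
    by_cases hA0 : G.Adj w f0
    · exact clique4_aux hω hA0 hA1 hA2 ha01 ha02 ha12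
    · exact diamond_aux h2 hw0 hA0 ha12 hA1 hA2 ha01 ha02
  have T1 : ∀ t u v : V, (¬ G.Adj t f0 ∧ ¬ G.Adj t f1) → (¬ G.Adj u f0 ∧ ¬ G.Adj u f1) →
      (¬ G.Adj v f0 ∧ ¬ G.Adj v f1) → G.Adj t u → G.Adj u v → t ≠ v → G.Adj t v := by
    intro t u v ht hu hv htu huv htv
    by_contra hc
    exact p3p2_aux h1 htu huv hc ha01 ht.1 ht.2 hu.1 hu.2 hv.1 hv.2 htv
      (fun h => ht.2 (by rw [h]; exact ha01))
      (fun h => ht.1 (by rw [h]; exact ha10))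
      (fun h => hu.2 (by rw [h]; exact ha01))
      (fun h => hu.1 (by rw [h]; exact ha10))
      (fun h => hv.2 (by rw [h]; exact ha01))
      (fun h => hv.1 (by rw [h]; exact ha10))
  have T2 : ∀ t u v : V, G.Adj t f1 → G.Adj u f1 → G.Adj v f1 →
      G.Adj t u → G.Adj u v → t ≠ v → G.Adj t v := by
    intro t u v ht hu hv htu huv htv
    by_contra hc
    exact diamond_aux h2 htv hc hu htu ht huv.symm hv
  have T3 : ∀ t u v : V, G.Adj t f0 → G.Adj u f0 → G.Adj v f0 →
      G.Adj t u → G.Adj u v → t ≠ v → G.Adj t v := by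
    intro t u v ht hu hv htu huv htv
    by_contra hc
    exact diamond_aux h2 htv hc hu htu ht huv.symm hv
  have M : ∀ (P : V → Prop),
      (∀ t u v : V, P t → P u → P v → G.Adj t u → G.Adj u v → t ≠ v → G.Adj t v) →
      ∀ u v : V, P u → P v → G.Adj u v → e u < e v → rkf G e P u < rkf G e P v := by
    intro P hT u v hu hv huv hlt
    simp only [rkf]
    apply Finset.card_lt_card
    rw [Finset.ssubset_def]
    constructor
    · intro t htm
      rw [Finset.mem_filter] at htm ⊢
      obtain ⟨-, hPt, hadj, hlt'⟩ := htm
      have htv : t ≠ v := by rintro rfl; exact absurd (lt_trans hlt' hlt) (lt_irrefl _)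
      exact ⟨Finset.mem_univ t, hPt, hT t u v hPt hu hv hadj huv htv, lt_trans hlt' hlt⟩
    · intro hsub'
      have := hsub' (Finset.mem_filter.mpr ⟨Finset.mem_univ u, hu, huv, hlt⟩)
      rw [Finset.mem_filter] at this
      exact G.loopless.irrefl u this.2.2.1
  have B1 : ∀ v : V, (¬ G.Adj v f0 ∧ ¬ G.Adj v f1) →
      rkf G e (fun t => ¬ G.Adj t f0 ∧ ¬ G.Adj t f1) v ≤ 2 := by
    intro v hv
    by_contra hgt
    push_neg at hgt
    simp only [rkf] at hgt
    obtain ⟨t, hts, htc⟩ := Finset.exists_subset_card_eq (n := 3) (by exact hgt)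
    obtain ⟨x, y, z, nxy, nxz, nyz, rfl⟩ := Finset.card_eq_three.mp htc
    have hx' := hts (show x ∈ ({x,y,z} : Finset V) by simp)
    have hy' := hts (show y ∈ ({x,y,z} : Finset V) by simp)
    have hz' := hts (show z ∈ ({x,y,z} : Finset V) by simp)
    simp only [Finset.mem_filter] at hx' hy' hz'
    have hx := hx'.2
    have hy := hy'.2
    have hz := hz'.2
    have hxy : G.Adj x y := T1 x v y hx.1 hv hy.1 hx.2.1 hy.2.1.symm nxy
    have hxz : G.Adj x z := T1 x v z hx.1 hv hz.1 hx.2.1 hz.2.1.symm nxz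
    have hyz : G.Adj y z := T1 y v z hy.1 hv hz.1 hy.2.1 hz.2.1.symm nyz
    exact clique4_aux hω hxy hxz hx.2.1 hyz hy.2.1 hz.2.1
  have B2 : ∀ v : V, G.Adj v f1 → rkf G e (fun t => G.Adj t f1) v ≤ 1 := by
    intro v hv
    by_contra hgt
    push_neg at hgt
    simp only [rkf] at hgt
    obtain ⟨t, hts, htc⟩ := Finset.exists_subset_card_eq (n := 2) (by exact hgt)
    obtain ⟨x, y, nxy, rfl⟩ := Finset.card_eq_two.mp htc
    have hx' := hts (show x ∈ ({x,y} : Finset V) by simp)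
    have hy' := hts (show y ∈ ({x,y} : Finset V) by simp)
    simp only [Finset.mem_filter] at hx' hy'
    have hx := hx'.2
    have hy := hy'.2
    have hxy : G.Adj x y := T2 x v y hx.1 hv hy.1 hx.2.1 hy.2.1.symm nxy
    exact clique4_aux hω hxy hx.2.1 hx.1 hy.2.1 hy.1 hv
  have B3 : ∀ v : V, G.Adj v f0 → rkf G e (fun t => G.Adj t f0) v ≤ 1 := by
    intro v hv
    by_contra hgt
    push_neg at hgt
    simp only [rkf] at hgt
    obtain ⟨t, hts, htc⟩ := Finset.exists_subset_card_eq (n := 2) (by exact hgt)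
    obtain ⟨x, y, nxy, rfl⟩ := Finset.card_eq_two.mp htc
    have hx' := hts (show x ∈ ({x,y} : Finset V) by simp)
    have hy' := hts (show y ∈ ({x,y} : Finset V) by simp)
    simp only [Finset.mem_filter] at hx' hy'
    have hx := hx'.2
    have hy := hy'.2
    have hxy : G.Adj x y := T3 x v y hx.1 hv hy.1 hx.2.1 hy.2.1.symm nxy
    exact clique4_aux hω hxy hx.2.1 hx.1 hy.2.1 hy.1 hv
  have XL : ∀ v w : V, (¬ G.Adj v f0 ∧ ¬ G.Adj v f1) →
      rkf G e (fun t => ¬ G.Adj t f0 ∧ ¬ G.Adj t f1) v = 2 →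
      w ≠ f1 → G.Adj w f0 → ¬ G.Adj w f1 → G.Adj v w → False := by
    intro v w hv hrk hwf1 hwf0 hnwf1 hvw
    simp only [rkf] at hrk
    obtain ⟨u1, u2, hne12, hset⟩ := Finset.card_eq_two.mp hrk
    have h1m' : u1 ∈ (insert u1 ({u2} : Finset V)) := Finset.mem_insert_self _ _
    rw [← hset] at h1m'
    have h2m' : u2 ∈ (insert u1 ({u2} : Finset V)) := by simp
    rw [← hset] at h2m'
    simp only [Finset.mem_filter] at h1m' h2m'
    have h1m := h1m'.2
    have h2m := h2m'.2
    have hu12 : G.Adj u1 u2 := T1 u1 v u2 h1m.1 hv h2m.1 h1m.2.1 h2m.2.1.symm hne12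
    by_cases hw1 : G.Adj w u1 <;> by_cases hw2 : G.Adj w u2
    · exact clique4_aux hω hw1 hw2 hvw.symm hu12 h1m.2.1 h2m.2.1
    · exact diamond_aux h2 (fun h => h2m.1.1 (by rw [← h]; exact hwf0)) hw2 h1m.2.1.symm hvw.symm hw1
        h2m.2.1 hu12.symm
    · exact diamond_aux h2 (fun h => h1m.1.1 (by rw [← h]; exact hwf0)) hw1 h2m.2.1.symm hvw.symm hw2
        h1m.2.1 hu12
    · exact p3p2_aux h1 ha10 hwf0.symm (fun h => hnwf1 h.symm) hu12
        (fun h => h1m.1.2 h.symm) (fun h => h2m.1.2 h.symm)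
        (fun h => h1m.1.1 h.symm) (fun h => h2m.1.1 h.symm)
        hw1 hw2
        (Ne.symm hwf1)
        (fun h => h1m.1.1 (by rw [← h]; exact ha10))
        (fun h => h2m.1.1 (by rw [← h]; exact ha10))
        (fun h => h1m.1.2 (by rw [← h]; exact ha01))
        (fun h => h2m.1.2 (by rw [← h]; exact ha01))
        (fun h => h1m.1.1 (by rw [← h]; exact hwf0))
        (fun h => h2m.1.1 (by rw [← h]; exact hwf0))
  have cls : ∀ w : V,
      (w = f0 ∧ colorFun G e f0 f1 f2 w = 0) ∨
      (w = f1 ∧ colorFun G e f0 f1 f2 w = 1) ∨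
      (w = f2 ∧ colorFun G e f0 f1 f2 w = 3) ∨
      (w ≠ f1 ∧ G.Adj w f1 ∧ ¬ G.Adj w f0 ∧ ¬ G.Adj w f2 ∧
        colorFun G e f0 f1 f2 w =
          (if rkf G e (fun t => G.Adj t f1) w = 0 then 3 else 4)) ∨
      (w ≠ f1 ∧ G.Adj w f0 ∧ ¬ G.Adj w f1 ∧ ¬ G.Adj w f2 ∧
        colorFun G e f0 f1 f2 w =
          (if rkf G e (fun t => G.Adj t f0) w = 0 then 5 else 2)) ∨
      ((¬ G.Adj w f0 ∧ ¬ G.Adj w f1) ∧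
        colorFun G e f0 f1 f2 w =
          (if rkf G e (fun t => ¬ G.Adj t f0 ∧ ¬ G.Adj t f1) w = 0 then 0
           else if rkf G e (fun t => ¬ G.Adj t f0 ∧ ¬ G.Adj t f1) w = 1 then 1 else 2)) := by
    intro w
    by_cases hb0 : w = f0
    · exact Or.inl ⟨hb0, by simp [colorFun, hb0]⟩
    by_cases hb1 : w = f1
    · exact Or.inr (Or.inl ⟨hb1, by simp [colorFun, hb1, Ne.symm n01]⟩)
    by_cases hb2 : w = f2
    · exact Or.inr (Or.inr (Or.inl ⟨hb2, by simp [colorFun, hb2, Ne.symm n02, Ne.symm n12]⟩))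
    by_cases hA1 : G.Adj w f1
    · have hA0 : ¬ G.Adj w f0 := fun h => L01 w hb2 h hA1
      have hA2 : ¬ G.Adj w f2 := fun h => L12 w hb0 hA1 h
      exact Or.inr (Or.inr (Or.inr (Or.inl ⟨hb1, hA1, hA0, hA2,
        by simp [colorFun, hb0, hb1, hb2, hA1]⟩)))
    by_cases hA0 : G.Adj w f0
    · have hA2 : ¬ G.Adj w f2 := fun h => L02 w hb1 hA0 h
      exact Or.inr (Or.inr (Or.inr (Or.inr (Or.inl ⟨hb1, hA0, hA1, hA2,
        by simp [colorFun, hb0, hb1, hb2, hA1, hA0]⟩))))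
    · exact Or.inr (Or.inr (Or.inr (Or.inr (Or.inr ⟨⟨hA0, hA1⟩,
        by simp [colorFun, hb0, hb1, hb2, hA1, hA0]⟩))))
  have hvalid : ∀ u v : V, G.Adj u v →
      colorFun G e f0 f1 f2 u = colorFun G e f0 f1 f2 v → False := by
    intro u v huv heq
    rcases cls u with ⟨hu, hcu⟩ | ⟨hu, hcu⟩ | ⟨hu, hcu⟩ |
        ⟨hu1, huA1, huA0, huA2, hcu⟩ | ⟨hu1, huA0, huA1, huA2, hcu⟩ | ⟨⟨huA0, huA1⟩, hcu⟩ <;>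
      rcases cls v with ⟨hv, hcv⟩ | ⟨hv, hcv⟩ | ⟨hv, hcv⟩ |
        ⟨hv1, hvA1, hvA0, hvA2, hcv⟩ | ⟨hv1, hvA0, hvA1, hvA2, hcv⟩ | ⟨⟨hvA0, hvA1⟩, hcv⟩
    · rw [hu, hv] at huv; exact G.loopless.irrefl _ huv
    · rw [hcu, hcv] at heq; exact absurd heq (by decide)
    · rw [hcu, hcv] at heq; exact absurd heq (by decide)
    · rw [hu] at huv; exact hvA0 huv.symm
    · rw [hcu, hcv] at heq; split_ifs at heq <;> exact absurd heq (by decide)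
    · rw [hu] at huv; exact hvA0 huv.symm
    · rw [hcu, hcv] at heq; exact absurd heq (by decide)
    · rw [hu, hv] at huv; exact G.loopless.irrefl _ huv
    · rw [hcu, hcv] at heq; exact absurd heq (by decide)
    · rw [hcu, hcv] at heq; split_ifs at heq <;> exact absurd heq (by decide)
    · rw [hu] at huv; exact hvA1 huv.symm
    · rw [hu] at huv; exact hvA1 huv.symm
    · rw [hcu, hcv] at heq; exact absurd heq (by decide)
    · rw [hcu, hcv] at heq; exact absurd heq (by decide)
    · rw [hu, hv] at huv; exact G.loopless.irrefl _ huv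
    · rw [hu] at huv; exact hvA2 huv.symm
    · rw [hu] at huv; exact hvA2 huv.symm
    · rw [hcu, hcv] at heq; split_ifs at heq <;> exact absurd heq (by decide)
    · rw [hv] at huv; exact huA0 huv
    · rw [hcu, hcv] at heq; split_ifs at heq <;> exact absurd heq (by decide)
    · rw [hv] at huv; exact huA2 huv
    · have hne' : e u ≠ e v := fun h => huv.ne (e.injective h)
      rcases lt_or_gt_of_ne hne' with hlt | hlt
      · have hm := M (fun t => G.Adj t f1) T2 u v huA1 hvA1 huv hlt
        have hb := B2 v hvA1
        rw [hcu, hcv] at heq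
        split_ifs at heq <;> first | exact absurd heq (by decide) | omega
      · have hm := M (fun t => G.Adj t f1) T2 v u hvA1 huA1 huv.symm hlt
        have hb := B2 u huA1
        rw [hcu, hcv] at heq
        split_ifs at heq <;> first | exact absurd heq (by decide) | omega
    · rw [hcu, hcv] at heq; split_ifs at heq <;> exact absurd heq (by decide)
    · rw [hcu, hcv] at heq; split_ifs at heq <;> exact absurd heq (by decide)
    · rw [hcu, hcv] at heq; split_ifs at heq <;> exact absurd heq (by decide)
    · rw [hcu, hcv] at heq; split_ifs at heq <;> exact absurd heq (by decide)
    · rw [hv] at huv; exact huA2 huv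
    · rw [hcu, hcv] at heq; split_ifs at heq <;> exact absurd heq (by decide)
    · have hne' : e u ≠ e v := fun h => huv.ne (e.injective h)
      rcases lt_or_gt_of_ne hne' with hlt | hlt
      · have hm := M (fun t => G.Adj t f0) T3 u v huA0 hvA0 huv hlt
        have hb := B3 v hvA0
        rw [hcu, hcv] at heq
        split_ifs at heq <;> first | exact absurd heq (by decide) | omega
      · have hm := M (fun t => G.Adj t f0) T3 v u hvA0 huA0 huv.symm hlt
        have hb := B3 u huA0
        rw [hcu, hcv] at heq
        split_ifs at heq <;> first | exact absurd heq (by decide) | omega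
    · rw [hcu, hcv] at heq
      split_ifs at heq <;>
        first
          | exact absurd heq (by decide)
          | exact XL v u ⟨hvA0, hvA1⟩ (by have := B1 v ⟨hvA0, hvA1⟩; omega)
              hu1 huA0 huA1 huv.symm
    · rw [hv] at huv; exact huA0 huv
    · rw [hv] at huv; exact huA1 huv
    · rw [hcu, hcv] at heq; split_ifs at heq <;> exact absurd heq (by decide)
    · rw [hcu, hcv] at heq; split_ifs at heq <;> exact absurd heq (by decide)
    · rw [hcu, hcv] at heq
      split_ifs at heq <;>
        first
          | exact absurd heq (by decide)
          | exact XL u v ⟨huA0, huA1⟩ (by have := B1 u ⟨huA0, huA1⟩; omega)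
              hv1 hvA0 hvA1 huv
    · have hne' : e u ≠ e v := fun h => huv.ne (e.injective h)
      rcases lt_or_gt_of_ne hne' with hlt | hlt
      · have hm := M (fun t => ¬ G.Adj t f0 ∧ ¬ G.Adj t f1) T1 u v ⟨huA0, huA1⟩
          ⟨hvA0, hvA1⟩ huv hlt
        have hb := B1 v ⟨hvA0, hvA1⟩
        rw [hcu, hcv] at heq
        split_ifs at heq <;> first | exact absurd heq (by decide) | omega
      · have hm := M (fun t => ¬ G.Adj t f0 ∧ ¬ G.Adj t f1) T1 v u ⟨hvA0, hvA1⟩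
          ⟨huA0, huA1⟩ huv.symm hlt
        have hb := B1 u ⟨huA0, huA1⟩
        rw [hcu, hcv] at heq
        split_ifs at heq <;> first | exact absurd heq (by decide) | omega
  have hcol : G.Colorable 6 :=
    ⟨SimpleGraph.Coloring.mk (colorFun G e f0 f1 f2)
      (fun {u v} h heq => hvalid u v h heq)⟩
  exact_mod_cast hcol.chromaticNumber_le
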